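/- arXiv:2512.22914 — 4 statements merged into one kernel-verified Lean document; each statement's English description precedes it below -/
import Mathlib

section
/- Let n ≥ 1, let Σ ∈ ℝ^{n×n} be symmetric positive definite, let q, q' ∈ ℝ^n with q ≠ q', set μ = q − q', and let ε ≥ 0. Then for every Borel set S ⊆ ℝ^n, N(q, Σ)(S) ≤ e^ε · N(q', Σ)(S) + Q(ε/‖μ‖_{Σ⁻¹} − ‖μ‖_{Σ⁻¹}/2). -/
open MeasureTheory Matrix

/-- Density of the multivariate Gaussian `N(m, S)` on `ℝ^n`:
`u ↦ (2π)^{-n/2} (det S)^{-1/2} exp(-(1/2)(u-m)ᵀ S⁻¹ (u-m))`. -/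
noncomputable def gaussianPdf {n : ℕ} (m : Fin n → ℝ) (S : Matrix (Fin n) (Fin n) ℝ)
    (u : Fin n → ℝ) : ℝ :=
  (Real.sqrt ((2 * Real.pi) ^ n * S.det))⁻¹ *
    Real.exp (-(1 / 2) * ((u - m) ⬝ᵥ S⁻¹ *ᵥ (u - m)))

/-- The multivariate Gaussian measure `N(m, S)` on `ℝ^n`. -/
noncomputable def gaussianMeasure {n : ℕ} (m : Fin n → ℝ) (S : Matrix (Fin n) (Fin n) ℝ) :
    Measure (Fin n → ℝ) :=
  volume.withDensity fun u => ENNReal.ofReal (gaussianPdf m S u)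

/-- The Gaussian tail function `Q(x) = (1/√(2π)) ∫_x^∞ exp(-z²/2) dz`. -/
noncomputable def gaussQ (x : ℝ) : ℝ :=
  (Real.sqrt (2 * Real.pi))⁻¹ * ∫ z in Set.Ioi x, Real.exp (-z ^ 2 / 2)

lemma measurable_bilin {n : ℕ} (A : Matrix (Fin n) (Fin n) ℝ) (a b : Fin n → ℝ) :
    Measurable fun u : Fin n → ℝ => (u - a) ⬝ᵥ A *ᵥ (u - b) := by
  simp only [dotProduct, mulVec, Pi.sub_apply]
  exact Finset.measurable_sum _ fun i _ =>
    (((measurable_pi_apply i).sub measurable_const).mul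
      (Finset.measurable_sum _ fun j _ =>
        (measurable_const.mul ((measurable_pi_apply j).sub measurable_const))))

lemma measurable_linform {n : ℕ} (μ : Fin n → ℝ) (A : Matrix (Fin n) (Fin n) ℝ) (a : Fin n → ℝ) :
    Measurable fun u : Fin n → ℝ => μ ⬝ᵥ A *ᵥ (u - a) := by
  simp only [dotProduct, mulVec, Pi.sub_apply]
  exact Finset.measurable_sum _ fun i _ =>
    measurable_const.mul
      (Finset.measurable_sum _ fun j _ =>
        (measurable_const.mul ((measurable_pi_apply j).sub measurable_const)))

lemma measurable_gaussianPdf {n : ℕ} (m : Fin n → ℝ) (S : Matrix (Fin n) (Fin n) ℝ) :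
    Measurable (gaussianPdf m S) :=
  measurable_const.mul (((measurable_bilin S⁻¹ m m).const_mul (-(1/2))).exp)

lemma dot_mulVec_mulVec {n : ℕ} (B M : Matrix (Fin n) (Fin n) ℝ) (x y : Fin n → ℝ) :
    (M *ᵥ x) ⬝ᵥ B *ᵥ (M *ᵥ y) = x ⬝ᵥ (Mᵀ * B * M) *ᵥ y := by
  rw [mulVec_mulVec, dotProduct_mulVec, ← vecMul_transpose, vecMul_vecMul,
    dotProduct_mulVec, mul_assoc]

lemma sqrt_pow' (a : ℝ) (ha : 0 ≤ a) (k : ℕ) : Real.sqrt (a ^ k) = Real.sqrt a ^ k := by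
  rw [show a ^ k = ((Real.sqrt a) ^ k) ^ 2 by
      rw [← pow_mul, mul_comm, pow_mul, Real.sq_sqrt ha],
    Real.sqrt_sq (pow_nonneg (Real.sqrt_nonneg a) k)]

lemma gauss_exp_integral : ∫ z : ℝ, Real.exp (-z ^ 2 / 2) = Real.sqrt (2 * Real.pi) := by
  have : ∀ z : ℝ, -z ^ 2 / 2 = -(1/2) * z ^ 2 := fun z => by ring
  simp_rw [this, integral_gaussian]
  congr 1
  rw [div_div_eq_mul_div, div_one]
  ring

lemma gauss_exp_integrable : Integrable (fun z : ℝ => Real.exp (-z ^ 2 / 2)) := by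
  have : ∀ z : ℝ, -z ^ 2 / 2 = -(1/2) * z ^ 2 := fun z => by ring
  simp_rw [this]
  exact integrable_exp_neg_mul_sq (by norm_num)

lemma gauss_tail {n : ℕ} (hn : 1 ≤ n) (t K : ℝ) (hK : 0 ≤ K) :
    haveI : NeZero n := ⟨by omega⟩
    ∫⁻ x in {x : Fin n → ℝ | t < x 0}, ENNReal.ofReal (K * Real.exp (-(1/2) * ∑ i, x i ^ 2)) =
      ENNReal.ofReal (K * Real.sqrt (2 * Real.pi) ^ (n - 1) *
        ∫ z in Set.Ioi t, Real.exp (-z ^ 2 / 2)) := by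
  haveI : NeZero n := ⟨by omega⟩
  set e : ℝ → ℝ := fun z => Real.exp (-z ^ 2 / 2) with he
  set f : Fin n → ℝ → ℝ := fun i => if i = 0 then Set.indicator (Set.Ioi t) e else e with hf
  have hf0 : f 0 = Set.indicator (Set.Ioi t) e := by simp only [hf, if_pos rfl]
  have hfne : ∀ i : Fin n, i ≠ 0 → f i = e := fun i h => by simp only [hf, if_neg h]
  have hfi : ∀ i, Integrable (f i) := by
    intro i
    rcases eq_or_ne i 0 with h | h
    · rw [h, hf0]; exact gauss_exp_integrable.indicator measurableSet_Ioi
    · rw [hfne i h]; exact gauss_exp_integrable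
  have hg : Integrable (fun x : Fin n → ℝ => ∏ i, f i (x i)) :=
    Integrable.fintype_prod (𝕜 := ℝ) hfi
  have hgnn : ∀ x : Fin n → ℝ, 0 ≤ ∏ i, f i (x i) := by
    intro x
    apply Finset.prod_nonneg
    intro i _
    rcases eq_or_ne i 0 with h | h
    · rw [h, hf0]; exact Set.indicator_nonneg (fun z _ => (Real.exp_pos _).le) _
    · rw [hfne i h]; exact (Real.exp_pos _).le
  have hs : MeasurableSet {x : Fin n → ℝ | t < x 0} :=
    measurableSet_lt measurable_const (measurable_pi_apply 0)
  have hpt : ∀ x : Fin n → ℝ, Set.indicator {x : Fin n → ℝ | t < x 0}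
      (fun x => ENNReal.ofReal (K * Real.exp (-(1/2) * ∑ i, x i ^ 2))) x
      = ENNReal.ofReal (K * ∏ i, f i (x i)) := by
    intro x
    have hexp : Real.exp (-(1/2) * ∑ i, x i ^ 2) = ∏ i, e (x i) := by
      rw [← Real.exp_sum]
      congr 1
      rw [Finset.mul_sum]
      exact Finset.sum_congr rfl fun i _ => by ring
    by_cases hx : t < x 0
    · rw [Set.indicator_of_mem (show x ∈ {x : Fin n → ℝ | t < x 0} from hx)]
      congr 1
      rw [hexp]
      congr 1
      apply Finset.prod_congr rfl
      intro i _
      rcases eq_or_ne i 0 with h | h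
      · rw [h, hf0, Set.indicator_of_mem (by simpa using hx)]
      · rw [hfne i h]
    · rw [Set.indicator_of_notMem (show x ∉ {x : Fin n → ℝ | t < x 0} from hx)]
      have h0 : f 0 (x 0) = 0 := by
        rw [hf0]; exact Set.indicator_of_notMem (by simpa using hx) e
      rw [Finset.prod_eq_zero (Finset.mem_univ (0 : Fin n)) h0, mul_zero,
        ENNReal.ofReal_zero]
  calc ∫⁻ x in {x : Fin n → ℝ | t < x 0},
        ENNReal.ofReal (K * Real.exp (-(1/2) * ∑ i, x i ^ 2))
      = ∫⁻ x : Fin n → ℝ, ENNReal.ofReal (K * ∏ i, f i (x i)) := by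
        rw [← lintegral_indicator hs]
        congr 1
        funext x
        exact hpt x
    _ = ENNReal.ofReal (∫ x : Fin n → ℝ, K * ∏ i, f i (x i)) := by
        rw [ofReal_integral_eq_lintegral_ofReal (hg.const_mul K)]
        exact Filter.Eventually.of_forall fun x => mul_nonneg hK (hgnn x)
    _ = ENNReal.ofReal (K * Real.sqrt (2 * Real.pi) ^ (n - 1) *
        ∫ z in Set.Ioi t, Real.exp (-z ^ 2 / 2)) := by
        congr 1
        rw [integral_const_mul, integral_fintype_prod_volume_eq_prod (𝕜 := ℝ) f,
          ← Finset.mul_prod_erase Finset.univ _ (Finset.mem_univ (0 : Fin n))]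
        have h0 : ∫ z, f 0 z = ∫ z in Set.Ioi t, e z := by
          rw [hf0]; exact integral_indicator measurableSet_Ioi
        have hrest : ∀ i ∈ Finset.univ.erase (0 : Fin n),
            ∫ z, f i z = Real.sqrt (2 * Real.pi) := by
          intro i hi
          rw [hfne i (Finset.ne_of_mem_erase hi)]
          exact gauss_exp_integral
        rw [Finset.prod_congr rfl hrest, Finset.prod_const, Finset.card_erase_of_mem
          (Finset.mem_univ _), Finset.card_univ, Fintype.card_fin, h0]
        ring

lemma exists_orthogonal {n : ℕ} [NeZero n] (w : Fin n → ℝ) (c : ℝ) (hc : 0 < c)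
    (hw : w ⬝ᵥ w = c ^ 2) :
    ∃ O : Matrix (Fin n) (Fin n) ℝ, O * Oᵀ = 1 ∧ O *ᵥ w = Pi.single 0 c := by
  classical
  set w' : EuclideanSpace ℝ (Fin n) := WithLp.toLp 2 w with hw'
  have hnorm : ‖w'‖ = c := by
    rw [EuclideanSpace.norm_eq]
    have : ∑ i, ‖w' i‖ ^ 2 = c ^ 2 := by
      rw [← hw]
      simp only [dotProduct]
      exact Finset.sum_congr rfl fun i _ => by
        rw [Real.norm_eq_abs, sq_abs, sq]
    rw [this, Real.sqrt_sq hc.le]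
  set v0 : EuclideanSpace ℝ (Fin n) := c⁻¹ • w' with hv0
  have hv0norm : ‖v0‖ = 1 := by
    rw [hv0, norm_smul, hnorm, norm_inv, Real.norm_eq_abs, abs_of_pos hc,
      inv_mul_cancel₀ hc.ne']
  have horth : Orthonormal ℝ (({0} : Set (Fin n)).restrict (fun _ : Fin n => v0)) := by
    constructor
    · intro i; exact hv0norm
    · intro i j hij
      exact absurd (Subtype.ext ((i.2.trans j.2.symm : (i : Fin n) = j))) hij
  obtain ⟨b, hb⟩ := horth.exists_orthonormalBasis_extension_of_card_eq
    (by simp [finrank_euclideanSpace_fin])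
  have hb0 : b 0 = v0 := hb 0 rfl
  set O : Matrix (Fin n) (Fin n) ℝ := Matrix.of fun i j => (b i : EuclideanSpace ℝ (Fin n)) j
    with hO
  have hinner : ∀ (i : Fin n) (x : EuclideanSpace ℝ (Fin n)),
      inner ℝ (b i) x = ∑ j, (b i : EuclideanSpace ℝ (Fin n)) j * x j := by
    intro i x
    rw [PiLp.inner_apply]
    exact Finset.sum_congr rfl fun j _ => by
      simp [RCLike.inner_apply, starRingEnd_apply, mul_comm]
  refine ⟨O, ?_, ?_⟩
  · ext i k
    rw [Matrix.mul_apply, Matrix.one_apply]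
    have := orthonormal_iff_ite.mp b.orthonormal i k
    rw [hinner] at this
    simpa [hO] using this
  · funext i
    have h1 : (O *ᵥ w) i = inner ℝ (b i) w' := by
      rw [hinner]
      simp [Matrix.mulVec, dotProduct, hO, hw']
    rw [h1]
    have hwv : w' = c • v0 := by rw [hv0, smul_inv_smul₀ hc.ne']
    rw [hwv, real_inner_smul_right, ← hb0]
    have := orthonormal_iff_ite.mp b.orthonormal i 0
    rw [this, Pi.single_apply]
    by_cases h : i = 0 <;> simp [h]

lemma gauss_tail_measure {n : ℕ} (hn : 1 ≤ n) (Sg : Matrix (Fin n) (Fin n) ℝ) (hSg : Sg.PosDef)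
    (q μ : Fin n → ℝ) (hμ : μ ≠ 0) (ε : ℝ) :
    ∫⁻ u in {u : Fin n → ℝ | ε - (μ ⬝ᵥ Sg⁻¹ *ᵥ μ) / 2 < μ ⬝ᵥ Sg⁻¹ *ᵥ (u - q)},
      ENNReal.ofReal (gaussianPdf q Sg u) =
      ENNReal.ofReal (gaussQ (ε / Real.sqrt (μ ⬝ᵥ Sg⁻¹ *ᵥ μ)
        - Real.sqrt (μ ⬝ᵥ Sg⁻¹ *ᵥ μ) / 2)) := by
  haveI : NeZero n := ⟨by omega⟩
  classical
  have hdet : Sg.det ≠ 0 := hSg.det_pos.ne'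
  set A := Sg⁻¹ with hA
  have hASym : Aᵀ = A := by
    have h := hSg.inv.isHermitian
    simpa [Matrix.IsHermitian, Matrix.conjTranspose_eq_transpose_of_trivial] using h
  set c2 : ℝ := μ ⬝ᵥ A *ᵥ μ with hc2def
  have hc2 : 0 < c2 := by simpa [hc2def] using hSg.inv.dotProduct_mulVec_pos hμ
  set c : ℝ := Real.sqrt c2 with hcdef
  have hc : 0 < c := Real.sqrt_pos.mpr hc2
  have hc2sq : c ^ 2 = c2 := Real.sq_sqrt hc2.le
  -- the square root of Sg
  open scoped MatrixOrder in
  set L := CFC.sqrt Sg with hLdef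
  have hLL : L * L = Sg := by
    open scoped MatrixOrder in exact CFC.sqrt_mul_sqrt_self Sg hSg.posSemidef.nonneg
  have hLsym : Lᵀ = L := by
    open scoped MatrixOrder in
    have h := (CFC.sqrt_nonneg Sg).posSemidef.isHermitian
    simpa [Matrix.IsHermitian, Matrix.conjTranspose_eq_transpose_of_trivial] using h
  have hLdet2 : L.det * L.det = Sg.det := by rw [← det_mul, hLL]
  have hLdetne : L.det ≠ 0 := by
    intro h
    rw [h, mul_zero] at hLdet2
    exact hdet hLdet2.symm
  have hLabs : |L.det| = Real.sqrt Sg.det := by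
    rw [← hLdet2, ← sq, Real.sqrt_sq_eq_abs]
  have hLAL : L * A * L = 1 := by
    have h1 : A = L⁻¹ * L⁻¹ := by rw [hA, ← hLL, Matrix.mul_inv_rev]
    rw [h1, Matrix.mul_assoc, Matrix.mul_assoc, Matrix.nonsing_inv_mul L
      (isUnit_iff_ne_zero.mpr hLdetne), Matrix.mul_one,
      Matrix.mul_nonsing_inv L (isUnit_iff_ne_zero.mpr hLdetne)]
  have hLAtLA : (L * A)ᵀ * (L * A) = A := by
    rw [Matrix.transpose_mul, hLsym, hASym, Matrix.mul_assoc, ← Matrix.mul_assoc L L A,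
      hLL, ← Matrix.mul_assoc, Matrix.mul_assoc A Sg A, hA,
      Matrix.mul_nonsing_inv Sg (isUnit_iff_ne_zero.mpr hdet), Matrix.mul_one]
  -- the vector w
  set w : Fin n → ℝ := (L * A) *ᵥ μ with hwdef
  have hww : w ⬝ᵥ w = c ^ 2 := by
    have h := dot_mulVec_mulVec 1 (L * A) μ μ
    rw [Matrix.mul_one, Matrix.one_mulVec, hLAtLA] at h
    rw [hwdef, h]
    exact hc2sq.symm
  obtain ⟨O, hOO, hOw⟩ := exists_orthogonal w c hc hww
  set M := L * Oᵀ with hMdef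
  have hOdet : |O.det| = 1 := by
    have h : O.det * O.det = 1 := by
      have := congrArg Matrix.det hOO
      rwa [Matrix.det_mul, Matrix.det_transpose, Matrix.det_one] at this
    rcases mul_self_eq_one_iff.mp h with h1 | h1 <;> rw [h1] <;> norm_num
  have hMabs : |M.det| = Real.sqrt Sg.det := by
    rw [hMdef, Matrix.det_mul, abs_mul, Matrix.det_transpose, hOdet, mul_one, hLabs]
  have hMdetne : M.det ≠ 0 := by
    intro h
    rw [h, abs_zero] at hMabs
    exact (Real.sqrt_pos.mpr hSg.det_pos).ne' hMabs.symm
  have hMAM : Mᵀ * A * M = 1 := by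
    have h2 : Mᵀ = O * L := by rw [hMdef, Matrix.transpose_mul, Matrix.transpose_transpose, hLsym]
    rw [h2, hMdef]
    calc O * L * A * (L * Oᵀ) = O * (L * A * L) * Oᵀ := by noncomm_ring
      _ = 1 := by rw [hLAL, Matrix.mul_one, hOO]
  have hMw : Mᵀ *ᵥ (A *ᵥ μ) = Pi.single 0 c := by
    have h2 : Mᵀ = O * L := by rw [hMdef, Matrix.transpose_mul, Matrix.transpose_transpose, hLsym]
    have h3 : L *ᵥ (A *ᵥ μ) = w := by rw [hwdef, ← Matrix.mulVec_mulVec]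
    rw [h2, ← Matrix.mulVec_mulVec, h3]
    exact hOw
  -- the affine transformation
  set T : (Fin n → ℝ) → (Fin n → ℝ) := fun x => q + M *ᵥ x with hTdef
  have hMvm : Measurable fun x : Fin n → ℝ => M *ᵥ x := by
    apply measurable_pi_lambda
    intro i
    simp only [mulVec, dotProduct]
    exact Finset.measurable_sum _ fun j _ => measurable_const.mul (measurable_pi_apply j)
  have hTmeas : Measurable T := measurable_const.add hMvm
  have hmap : Measure.map T volume = ENNReal.ofReal |M.det|⁻¹ • volume := by
    have h1 : Measure.map (fun x : Fin n → ℝ => M *ᵥ x) volume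
        = ENNReal.ofReal |M.det|⁻¹ • volume := by
      have hfd : LinearMap.det (Matrix.toLin' M) ≠ 0 := by rwa [LinearMap.det_toLin']
      have h := Real.map_linearMap_volume_pi_eq_smul_volume_pi hfd
      rw [LinearMap.det_toLin'] at h
      have hco : ⇑(Matrix.toLin' M) = fun x : Fin n → ℝ => M *ᵥ x :=
        funext fun x => Matrix.toLin'_apply M x
      rwa [hco, abs_inv] at h
    have h2 : T = (fun u => q + u) ∘ (fun x : Fin n → ℝ => M *ᵥ x) := rfl
    rw [h2, ← Measure.map_map (measurable_const_add q) hMvm, h1, Measure.map_smul,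
      (measurePreserving_add_left volume q).map_eq]
  -- the bad set and its preimage
  set B : Set (Fin n → ℝ) := {u | ε - c2 / 2 < μ ⬝ᵥ A *ᵥ (u - q)} with hBdef
  have hBmeas : MeasurableSet B :=
    measurableSet_lt measurable_const (measurable_linform μ A q)
  set t : ℝ := ε / c - c / 2 with htdef
  have hact : ∀ x : Fin n → ℝ, μ ⬝ᵥ A *ᵥ (T x - q) = c * x 0 := by
    intro x
    have h1 : T x - q = M *ᵥ x := by rw [hTdef]; simp
    rw [h1, Matrix.mulVec_mulVec, Matrix.dotProduct_mulVec, ← Matrix.mulVec_transpose,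
      Matrix.transpose_mul, hASym, ← Matrix.mulVec_mulVec, hMw, single_dotProduct]
  have hpre : T ⁻¹' B = {x : Fin n → ℝ | t < x 0} := by
    ext x
    simp only [Set.mem_preimage, hBdef, Set.mem_setOf_eq, hact x]
    have hct : ε - c2 / 2 = c * t := by
      rw [htdef, ← hc2sq]
      field_simp
    rw [hct]
    exact mul_lt_mul_iff_right₀ hc
  set K : ℝ := (Real.sqrt ((2 * Real.pi) ^ n * Sg.det))⁻¹ with hKdef
  have hK : 0 ≤ K := inv_nonneg.mpr (Real.sqrt_nonneg _)
  have hcomp : ∀ x : Fin n → ℝ, gaussianPdf q Sg (T x)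
      = K * Real.exp (-(1/2) * ∑ i, x i ^ 2) := by
    intro x
    have h1 : T x - q = M *ᵥ x := by rw [hTdef]; simp
    unfold gaussianPdf
    rw [h1, dot_mulVec_mulVec, hMAM, Matrix.one_mulVec]
    have hxx : x ⬝ᵥ x = ∑ i, x i ^ 2 := by
      simp only [dotProduct]
      exact Finset.sum_congr rfl fun i _ => (sq (x i)).symm
    rw [hxx]
  -- change of variables
  have hmeasf : Measurable fun u => ENNReal.ofReal (gaussianPdf q Sg u) :=
    (measurable_gaussianPdf q Sg).ennreal_ofReal
  have hsm := setLIntegral_map (μ := volume) hBmeas hmeasf hTmeas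
  rw [hmap, Measure.restrict_smul, lintegral_smul_measure] at hsm
  have habs : 0 < |M.det| := abs_pos.mpr hMdetne
  have hcancel : ENNReal.ofReal |M.det| * ENNReal.ofReal |M.det|⁻¹ = 1 := by
    rw [← ENNReal.ofReal_mul habs.le, mul_inv_cancel₀ habs.ne', ENNReal.ofReal_one]
  have hchg : ∫⁻ u in B, ENNReal.ofReal (gaussianPdf q Sg u)
      = ENNReal.ofReal |M.det| * ∫⁻ x in T ⁻¹' B, ENNReal.ofReal (gaussianPdf q Sg (T x)) := by
    rw [← hsm, smul_eq_mul, ← mul_assoc, hcancel, one_mul]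
  rw [hchg, hpre]
  have hint : ∫⁻ x in {x : Fin n → ℝ | t < x 0},
      ENNReal.ofReal (gaussianPdf q Sg (T x))
      = ENNReal.ofReal (K * Real.sqrt (2 * Real.pi) ^ (n - 1) *
        ∫ z in Set.Ioi t, Real.exp (-z ^ 2 / 2)) := by
    rw [← gauss_tail hn t K hK]
    apply lintegral_congr
    intro x
    rw [hcomp x]
  rw [hint, ← ENNReal.ofReal_mul habs.le]
  congr 1
  rw [hMabs, hKdef]
  have hs2pi : (0:ℝ) < Real.sqrt (2 * Real.pi) :=
    Real.sqrt_pos.mpr (by positivity)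
  have hsplit : Real.sqrt ((2 * Real.pi) ^ n * Sg.det)
      = Real.sqrt (2 * Real.pi) ^ n * Real.sqrt Sg.det := by
    rw [Real.sqrt_mul (by positivity), sqrt_pow' _ (by positivity)]
  rw [hsplit]
  have hd : (0:ℝ) < Real.sqrt Sg.det := Real.sqrt_pos.mpr hSg.det_pos
  have hpow : Real.sqrt (2 * Real.pi) ^ n
      = Real.sqrt (2 * Real.pi) ^ (n - 1) * Real.sqrt (2 * Real.pi) := by
    conv_lhs => rw [show n = (n - 1) + 1 by omega]
    rw [pow_succ]
  rw [hpow]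
  unfold gaussQ
  have hq : t = ε / c - c / 2 := htdef
  field_simp

theorem gaussian_dp_bound {n : ℕ} (hn : 1 ≤ n)
    (Sg : Matrix (Fin n) (Fin n) ℝ) (hSg : Sg.PosDef)
    (q q' : Fin n → ℝ) (hq : q ≠ q') (ε : ℝ) (hε : 0 ≤ ε) :
    ∀ S : Set (Fin n → ℝ), MeasurableSet S →
      gaussianMeasure q Sg S ≤
        ENNReal.ofReal (Real.exp ε) * gaussianMeasure q' Sg S +
          ENNReal.ofReal (gaussQ
            (ε / Real.sqrt ((q - q') ⬝ᵥ Sg⁻¹ *ᵥ (q - q'))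
              - Real.sqrt ((q - q') ⬝ᵥ Sg⁻¹ *ᵥ (q - q')) / 2)) := by
  intro S hS
  have hμ : q - q' ≠ 0 := sub_ne_zero.mpr hq
  set A := Sg⁻¹ with hA
  have hASym : Aᵀ = A := by
    have h := hSg.inv.isHermitian
    simpa [Matrix.IsHermitian, Matrix.conjTranspose_eq_transpose_of_trivial] using h
  set c2 : ℝ := (q - q') ⬝ᵥ A *ᵥ (q - q') with hc2def
  set B : Set (Fin n → ℝ) := {u | ε - c2 / 2 < (q - q') ⬝ᵥ A *ᵥ (u - q)} with hBdef
  have hBmeas : MeasurableSet B :=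
    measurableSet_lt measurable_const (measurable_linform (q - q') A q)
  -- pointwise bound off B
  have hpt : ∀ u : Fin n → ℝ, u ∉ B →
      gaussianPdf q Sg u ≤ Real.exp ε * gaussianPdf q' Sg u := by
    intro u hu
    have hD : (q - q') ⬝ᵥ A *ᵥ (u - q) ≤ ε - c2 / 2 := not_lt.mp hu
    set K : ℝ := (Real.sqrt ((2 * Real.pi) ^ n * Sg.det))⁻¹ with hKdef
    have hK : 0 ≤ K := inv_nonneg.mpr (Real.sqrt_nonneg _)
    set X : ℝ := (u - q) ⬝ᵥ A *ᵥ (u - q) with hX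
    set Y : ℝ := (u - q') ⬝ᵥ A *ᵥ (u - q') with hY
    set D : ℝ := (q - q') ⬝ᵥ A *ᵥ (u - q) with hDdef
    have hYx : Y = X + 2 * D + c2 := by
      rw [hY, show u - q' = (u - q) + (q - q') from (sub_add_sub_cancel u q q').symm]
      rw [add_dotProduct, Matrix.mulVec_add, dotProduct_add,
        dotProduct_add]
      have hxm : (u - q) ⬝ᵥ A *ᵥ (q - q') = (q - q') ⬝ᵥ A *ᵥ (u - q) := by
        rw [Matrix.dotProduct_mulVec, ← Matrix.mulVec_transpose, hASym, dotProduct_comm]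
      rw [hxm, hX, hDdef, hc2def]
      ring
    show K * Real.exp (-(1/2) * X) ≤ Real.exp ε * (K * Real.exp (-(1/2) * Y))
    have hexp : Real.exp (-(1/2) * X) ≤ Real.exp ε * Real.exp (-(1/2) * Y) := by
      rw [← Real.exp_add]
      apply Real.exp_le_exp.mpr
      rw [hYx]
      linarith
    calc K * Real.exp (-(1/2) * X) ≤ K * (Real.exp ε * Real.exp (-(1/2) * Y)) :=
          mul_le_mul_of_nonneg_left hexp hK
      _ = Real.exp ε * (K * Real.exp (-(1/2) * Y)) := by ring
  -- main chain
  have hwd : ∀ (m : Fin n → ℝ) (s : Set (Fin n → ℝ)), MeasurableSet s →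
      gaussianMeasure m Sg s = ∫⁻ u in s, ENNReal.ofReal (gaussianPdf m Sg u) := by
    intro m s hs
    rw [gaussianMeasure, withDensity_apply _ hs]
  rw [hwd q S hS]
  calc ∫⁻ u in S, ENNReal.ofReal (gaussianPdf q Sg u)
      ≤ ∫⁻ u in (S \ B) ∪ B, ENNReal.ofReal (gaussianPdf q Sg u) := by
        apply lintegral_mono_set
        intro u hu
        by_cases h : u ∈ B
        · exact Or.inr h
        · exact Or.inl ⟨hu, h⟩
    _ = (∫⁻ u in S \ B, ENNReal.ofReal (gaussianPdf q Sg u))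
        + ∫⁻ u in B, ENNReal.ofReal (gaussianPdf q Sg u) :=
        lintegral_union hBmeas Set.disjoint_sdiff_left
    _ ≤ ENNReal.ofReal (Real.exp ε) * gaussianMeasure q' Sg S +
        ENNReal.ofReal (gaussQ
          (ε / Real.sqrt ((q - q') ⬝ᵥ Sg⁻¹ *ᵥ (q - q'))
            - Real.sqrt ((q - q') ⬝ᵥ Sg⁻¹ *ᵥ (q - q')) / 2)) := by
        apply add_le_add
        · calc ∫⁻ u in S \ B, ENNReal.ofReal (gaussianPdf q Sg u)
              ≤ ∫⁻ u in S \ B, ENNReal.ofReal (Real.exp ε * gaussianPdf q' Sg u) := by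
                apply setLIntegral_mono
                  (measurable_const.mul (measurable_gaussianPdf q' Sg)).ennreal_ofReal
                intro u hu
                exact ENNReal.ofReal_le_ofReal (hpt u hu.2)
            _ = ENNReal.ofReal (Real.exp ε) *
                ∫⁻ u in S \ B, ENNReal.ofReal (gaussianPdf q' Sg u) := by
                simp_rw [ENNReal.ofReal_mul (Real.exp_nonneg ε)]
                exact lintegral_const_mul _ (measurable_gaussianPdf q' Sg).ennreal_ofReal
            _ ≤ ENNReal.ofReal (Real.exp ε) * gaussianMeasure q' Sg S := by
                apply mul_le_mul_right
                rw [hwd q' S hS]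
                exact lintegral_mono_set Set.diff_subset
        · exact le_of_eq (gauss_tail_measure hn Sg hSg q (q - q') hμ ε)
end

section
/- Let ε₀ > 0, ε > 0, c ∈ ℝ, let M ∈ ℝ^{N×d} be a nonzero matrix, and let S ∈ ℝ^{N×N} be symmetric positive definite. Set b = ε₀²·‖M‖₂² / (−c + √(c² + 2ε)), where ‖M‖₂ is the operator (spectral) norm of M. If S − b·I_N is positive semidefinite, then for all d₁, d₂ ∈ ℝ^d with ‖d₁ − d₂‖ ≤ ε₀ and μ := M(d₁ − d₂) ≠ 0, one has (i) μᵀS⁻¹μ ≤ −c + √(c² + 2ε), and (ii) −(1/2)·μᵀS⁻¹μ + ε/(μᵀS⁻¹μ) ≥ c. -/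
open Matrix

/-- The spectral (ℓ²-operator) norm of a real matrix. -/
noncomputable def specNorm {N d : ℕ} (M : Matrix (Fin N) (Fin d) ℝ) : ℝ :=
  ‖LinearMap.toContinuousLinearMap (Matrix.toEuclideanLin M)‖

lemma norm_sq_eq_dot {n : ℕ} (x : Fin n → ℝ) :
    ‖(WithLp.equiv 2 (Fin n → ℝ)).symm x‖ ^ 2 = x ⬝ᵥ x := by
  rw [EuclideanSpace.norm_eq, Real.sq_sqrt (by positivity)]
  simp [dotProduct, sq, Real.norm_eq_abs, abs_mul_abs_self]

lemma final_ineq (q t s c ε : ℝ) (hq : 0 < q) (hqt : q ≤ t) (ht : t = -c + s)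
    (hs2 : s ^ 2 = c ^ 2 + 2 * ε) (hsc : 0 ≤ s + c) :
    -(1 / 2) * q + ε / q ≥ c := by
  have ht2 : t ^ 2 + 2 * c * t = 2 * ε := by rw [ht]; linear_combination hs2
  have hqtc : (0 : ℝ) ≤ q + t + 2 * c := by
    have : t + 2 * c = s + c := by rw [ht]; ring
    linarith
  have hkey : q ^ 2 + 2 * c * q ≤ 2 * ε := by
    nlinarith [mul_nonneg (sub_nonneg.2 hqt) hqtc]
  have hdiv : c + (1 / 2) * q ≤ ε / q := by
    rw [le_div_iff₀ hq]
    nlinarith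
  linarith

/-- Theorem 2 of the paper: SDP relaxation preserves the privacy constraint. -/
theorem sdp_relaxation_feasible {N d : ℕ} (ε₀ ε c : ℝ) (hε₀ : 0 < ε₀) (hε : 0 < ε)
    (M : Matrix (Fin N) (Fin d) ℝ) (hM : M ≠ 0)
    (S : Matrix (Fin N) (Fin N) ℝ) (hS : S.PosDef)
    (hSb : (S - (ε₀ ^ 2 * specNorm M ^ 2 / (-c + Real.sqrt (c ^ 2 + 2 * ε))) •
        (1 : Matrix (Fin N) (Fin N) ℝ)).PosSemidef) :
    ∀ d₁ d₂ : Fin d → ℝ, Real.sqrt ((d₁ - d₂) ⬝ᵥ (d₁ - d₂)) ≤ ε₀ →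
      M *ᵥ (d₁ - d₂) ≠ 0 →
      (M *ᵥ (d₁ - d₂)) ⬝ᵥ S⁻¹ *ᵥ (M *ᵥ (d₁ - d₂)) ≤ -c + Real.sqrt (c ^ 2 + 2 * ε) ∧
      -(1 / 2) * ((M *ᵥ (d₁ - d₂)) ⬝ᵥ S⁻¹ *ᵥ (M *ᵥ (d₁ - d₂))) +
          ε / ((M *ᵥ (d₁ - d₂)) ⬝ᵥ S⁻¹ *ᵥ (M *ᵥ (d₁ - d₂))) ≥ c := by
  intro d₁ d₂ hd hμ0
  set v : Fin d → ℝ := d₁ - d₂ with hvdef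
  set μ : Fin N → ℝ := M *ᵥ v with hμdef
  set s : ℝ := Real.sqrt (c ^ 2 + 2 * ε) with hsdef
  have hs0 : 0 ≤ s := Real.sqrt_nonneg _
  have hs2 : s ^ 2 = c ^ 2 + 2 * ε := Real.sq_sqrt (by positivity)
  have hsc : 0 ≤ s + c := by nlinarith
  have ht : 0 < -c + s := by nlinarith
  set t : ℝ := -c + s with htdef
  -- positivity of the spectral norm
  have hMn : 0 < specNorm M := by
    rw [specNorm, norm_pos_iff]
    intro h0
    apply hM
    have h1 : Matrix.toEuclideanLin M = 0 :=
      LinearMap.toContinuousLinearMap.injective (by simpa using h0)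
    exact Matrix.toEuclideanLin.injective (by simpa using h1)
  set b : ℝ := ε₀ ^ 2 * specNorm M ^ 2 / t with hbdef
  have hb : 0 < b := by positivity
  have hbt : b * t = ε₀ ^ 2 * specNorm M ^ 2 := by
    rw [hbdef, div_mul_cancel₀ _ ht.ne']
  -- bound on μ ⬝ᵥ μ
  have hvv0 : 0 ≤ v ⬝ᵥ v := Finset.sum_nonneg fun i _ => mul_self_nonneg _
  have hvv : v ⬝ᵥ v ≤ ε₀ ^ 2 := by
    have := Real.sq_sqrt hvv0
    nlinarith [Real.sqrt_nonneg (v ⬝ᵥ v)]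
  have hμμ : μ ⬝ᵥ μ ≤ specNorm M ^ 2 * (v ⬝ᵥ v) := by
    have h1 := (LinearMap.toContinuousLinearMap (Matrix.toEuclideanLin M)).le_opNorm
      ((WithLp.equiv 2 (Fin d → ℝ)).symm v)
    rw [LinearMap.coe_toContinuousLinearMap'] at h1
    change ‖(WithLp.equiv 2 (Fin N → ℝ)).symm μ‖ ≤ _ at h1
    have h2 : ‖(WithLp.equiv 2 (Fin N → ℝ)).symm μ‖ ^ 2 ≤
        (specNorm M * ‖(WithLp.equiv 2 (Fin d → ℝ)).symm v‖) ^ 2 := by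
      exact pow_le_pow_left₀ (norm_nonneg _) h1 2
    rw [norm_sq_eq_dot, mul_pow, norm_sq_eq_dot] at h2
    exact h2
  have hμμt : μ ⬝ᵥ μ ≤ b * t := by
    rw [hbt]
    calc μ ⬝ᵥ μ ≤ specNorm M ^ 2 * (v ⬝ᵥ v) := hμμ
    _ ≤ specNorm M ^ 2 * ε₀ ^ 2 := by nlinarith
    _ = ε₀ ^ 2 * specNorm M ^ 2 := by ring
  have hμμ0 : 0 ≤ μ ⬝ᵥ μ := Finset.sum_nonneg fun i _ => mul_self_nonneg _
  -- the quadratic form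
  set q : ℝ := μ ⬝ᵥ S⁻¹ *ᵥ μ with hqdef
  have hSinv : (S⁻¹).PosDef := hS.inv
  have hq : 0 < q := by
    have := hSinv.dotProduct_mulVec_pos hμ0
    simpa using this
  set y : Fin N → ℝ := S⁻¹ *ᵥ μ with hydef
  have hdet : IsUnit S.det := isUnit_iff_ne_zero.mpr hS.det_pos.ne'
  have hSy : S *ᵥ y = μ := by
    rw [hydef, Matrix.mulVec_mulVec, Matrix.mul_nonsing_inv S hdet, Matrix.one_mulVec]
  have hyy0 : 0 ≤ y ⬝ᵥ y := Finset.sum_nonneg fun i _ => mul_self_nonneg _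
  have hqy : q = μ ⬝ᵥ y := rfl
  have hqSy : q = y ⬝ᵥ S *ᵥ y := by
    rw [hSy, dotProduct_comm, hqy]
  -- from the LMI
  have hb1 : b * (y ⬝ᵥ y) ≤ q := by
    have h0 := hSb.dotProduct_mulVec_nonneg y
    rw [star_trivial, Matrix.sub_mulVec, Matrix.smul_mulVec, Matrix.one_mulVec,
      dotProduct_sub, dotProduct_smul] at h0
    rw [hqSy]
    have : b • (y ⬝ᵥ y) = b * (y ⬝ᵥ y) := rfl
    linarith [h0, this ▸ h0]
  -- Cauchy-Schwarz
  have hCS : q ^ 2 ≤ (μ ⬝ᵥ μ) * (y ⬝ᵥ y) := by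
    have := Finset.sum_mul_sq_le_sq_mul_sq Finset.univ μ y
    rw [hqy]
    simpa [dotProduct, sq, mul_pow] using this
  -- part (i)
  have hqt : q ≤ t := by
    have h1 : b * q ^ 2 ≤ (μ ⬝ᵥ μ) * q := by
      calc b * q ^ 2 ≤ b * ((μ ⬝ᵥ μ) * (y ⬝ᵥ y)) := by
            exact mul_le_mul_of_nonneg_left hCS hb.le
        _ = (μ ⬝ᵥ μ) * (b * (y ⬝ᵥ y)) := by ring
        _ ≤ (μ ⬝ᵥ μ) * q := mul_le_mul_of_nonneg_left hb1 hμμ0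
    have h2 : (μ ⬝ᵥ μ) * q ≤ b * t * q := mul_le_mul_of_nonneg_right hμμt hq.le
    nlinarith [mul_pos hb hq]
  refine ⟨hqt, ?_⟩
  exact final_ineq q t s c ε hq hqt htdef hs2 hsc
end

section
/- Let Υ, Σ* ∈ ℝ^{N×N} be symmetric positive semidefinite matrices such that S* := Υ + Σ* is positive definite, and let b > 0. Set α = max(1, b/λ_min(S*)), where λ_min(S*) is the smallest eigenvalue of S*, and set Σ' = α·Σ* + (α − 1)·Υ. Then: (i) Σ' is positive semidefinite; (ii) Υ + Σ' − b·I_N is positive semidefinite; (iii) tr(Σ') − tr(Σ*) = (α − 1)·tr(S*). Consequently, the infimum of tr(Σ) over all symmetric positive semidefinite Σ ∈ ℝ^{N×N} with Υ + Σ − b·I_N positive semidefinite is at most tr(Σ*) + (max(1, b/λ_min(S*)) − 1)·tr(S*). -/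
open Matrix

section Aux

variable {N : ℕ}

lemma aux_psd_smul {A : Matrix (Fin N) (Fin N) ℝ} (hA : A.PosSemidef) {c : ℝ} (hc : 0 ≤ c) :
    (c • A).PosSemidef := by
  constructor
  · unfold Matrix.IsHermitian
    rw [conjTranspose_smul, hA.1.eq]
    simp
  · intro x
    exact (hA.smul hc).2 x

lemma aux_trace_nonneg {A : Matrix (Fin N) (Fin N) ℝ} (hA : A.PosSemidef) :
    0 ≤ A.trace := by
  have h : ∀ i, 0 ≤ A i i := by
    intro i
    exact hA.diag_nonneg
  exact Finset.sum_nonneg fun i _ => h i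

lemma aux_sub_smul_one_psd {A : Matrix (Fin N) (Fin N) ℝ} (hA : A.IsHermitian) {c : ℝ}
    (h : ∀ i, c ≤ hA.eigenvalues i) : (A - c • 1).PosSemidef := by
  set U : Matrix (Fin N) (Fin N) ℝ := (hA.eigenvectorUnitary : Matrix (Fin N) (Fin N) ℝ)
  have hU : U * star U = 1 := (Matrix.mem_unitaryGroup_iff).mp (hA.eigenvectorUnitary).2
  have key : A - c • 1 = U * (diagonal (fun i => hA.eigenvalues i - c)) * star U := by
    have hd : diagonal (fun i => hA.eigenvalues i - c)
        = diagonal (RCLike.ofReal ∘ hA.eigenvalues) - c • (1 : Matrix (Fin N) (Fin N) ℝ) := by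
      rw [smul_one_eq_diagonal, ← diagonal_sub]
      rfl
    rw [hd, Matrix.mul_sub, Matrix.sub_mul]
    have hsp := hA.spectral_theorem
    simp only [Unitary.conjStarAlgAut_apply] at hsp
    rw [← hsp]
    congr 1
    rw [Matrix.mul_smul, Matrix.mul_one, Matrix.smul_mul, hU]
  rw [key]
  apply Matrix.PosSemidef.mul_mul_conjTranspose_same
  exact posSemidef_diagonal_iff.mpr fun i => sub_nonneg.mpr (h i)

end Aux

/-- Proposition 1 of the paper: upper bound on the relaxation gap. -/
theorem relaxation_gap_bound {N : ℕ} (hN : 1 ≤ N)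
    (Υ Sstar : Matrix (Fin N) (Fin N) ℝ)
    (hΥ : Υ.PosSemidef) (hSstar : Sstar.PosSemidef)
    (hS : (Υ + Sstar).PosDef) (b : ℝ) (hb : 0 < b) :
    let lamMin : ℝ := ⨅ i, hS.1.eigenvalues i
    let α : ℝ := max 1 (b / lamMin)
    let S' : Matrix (Fin N) (Fin N) ℝ := α • Sstar + (α - 1) • Υ
    S'.PosSemidef ∧
    (Υ + S' - b • (1 : Matrix (Fin N) (Fin N) ℝ)).PosSemidef ∧
    S'.trace - Sstar.trace = (α - 1) * (Υ + Sstar).trace ∧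
    sInf {t : ℝ | ∃ S'' : Matrix (Fin N) (Fin N) ℝ, S''.PosSemidef ∧
        (Υ + S'' - b • (1 : Matrix (Fin N) (Fin N) ℝ)).PosSemidef ∧ t = S''.trace} ≤
      Sstar.trace + (α - 1) * (Υ + Sstar).trace := by
  intro lamMin α S'
  haveI : Nonempty (Fin N) := Fin.pos_iff_nonempty.mp hN
  obtain ⟨i0, hi0⟩ := exists_eq_ciInf_of_finite (f := hS.1.eigenvalues)
  have hlam_pos : 0 < lamMin := by
    have := hS.eigenvalues_pos i0
    simp only [lamMin, ← hi0]
    exact this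
  have hα1 : (1 : ℝ) ≤ α := le_max_left _ _
  have hα_pos : 0 < α := lt_of_lt_of_le one_pos hα1
  have hS'psd : S'.PosSemidef :=
    (aux_psd_smul hSstar hα_pos.le).add (aux_psd_smul hΥ (by linarith))
  have h2 : b / α ≤ lamMin := by
    rw [div_le_iff₀ hα_pos]
    have h3 : b / lamMin * lamMin ≤ α * lamMin :=
      mul_le_mul_of_nonneg_right (le_max_right 1 (b/lamMin)) hlam_pos.le
    have h4 : b / lamMin * lamMin = b := div_mul_cancel₀ b hlam_pos.ne'
    linarith [mul_comm α lamMin]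
  have hpsd2 : (Υ + S' - b • (1 : Matrix (Fin N) (Fin N) ℝ)).PosSemidef := by
    have hkey : Υ + S' - b • (1 : Matrix (Fin N) (Fin N) ℝ)
        = α • ((Υ + Sstar) - (b / α) • (1 : Matrix (Fin N) (Fin N) ℝ)) := by
      simp only [S', smul_sub, smul_smul, mul_div_cancel₀ _ (ne_of_gt hα_pos)]
      module
    rw [hkey]
    apply aux_psd_smul _ hα_pos.le
    apply aux_sub_smul_one_psd hS.1
    intro i
    have h1 : lamMin ≤ hS.1.eigenvalues i :=
      ciInf_le (Set.Finite.bddBelow (Set.finite_range _)) i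
    linarith
  have htr : S'.trace - Sstar.trace = (α - 1) * (Υ + Sstar).trace := by
    simp only [S', trace_add, trace_smul, smul_eq_mul]
    ring
  refine ⟨hS'psd, hpsd2, htr, ?_⟩
  have hmem : Sstar.trace + (α - 1) * (Υ + Sstar).trace ∈
      {t : ℝ | ∃ S'' : Matrix (Fin N) (Fin N) ℝ, S''.PosSemidef ∧
        (Υ + S'' - b • (1 : Matrix (Fin N) (Fin N) ℝ)).PosSemidef ∧ t = S''.trace} :=
    ⟨S', hS'psd, hpsd2, by linarith⟩
  have hbdd : BddBelow {t : ℝ | ∃ S'' : Matrix (Fin N) (Fin N) ℝ, S''.PosSemidef ∧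
      (Υ + S'' - b • (1 : Matrix (Fin N) (Fin N) ℝ)).PosSemidef ∧ t = S''.trace} := by
    refine ⟨0, fun t ht => ?_⟩
    obtain ⟨S'', hpsd, _, rfl⟩ := ht
    exact aux_trace_nonneg hpsd
  exact csInf_le hbdd hmem
end

section
/- Let M ≥ 1 and for i = 1, …, M let P_i ∈ ℝ^{n×n} be symmetric positive definite, Σ_i ∈ ℝ^{n×n} symmetric positive semidefinite, and w_i ≥ 0 real weights with Σ_{i=1}^M w_i = 1. Then the matrices A := Σ_{i=1}^M w_i (P_i + Σ_i)⁻¹ and B := Σ_{i=1}^M w_i P_i⁻¹ are symmetric positive definite, and, setting P = A⁻¹ and P^{np} = B⁻¹, the identity P − P^{np} = P · ( Σ_{i=1}^M w_i · P_i⁻¹ Σ_i (P_i + Σ_i)⁻¹ ) · P^{np} holds. -/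
open Matrix Finset

private lemma sum_smul_posDef {M n : ℕ} (f : Fin M → Matrix (Fin n) (Fin n) ℝ)
    (w : Fin M → ℝ) (hf : ∀ i, (f i).PosDef) (hw : ∀ i, 0 ≤ w i)
    (hwsum : ∑ i, w i = 1) : (∑ i, w i • f i).PosDef := by
  obtain ⟨i0, hi0⟩ : ∃ i, 0 < w i := by
    by_contra h
    push_neg at h
    have : ∑ i, w i = 0 := Finset.sum_eq_zero fun i _ => le_antisymm (h i) (hw i)
    simp [this] at hwsum
  refine posDef_iff_dotProduct_mulVec.mpr ⟨?_, ?_⟩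
  · simp only [IsHermitian, conjTranspose_sum, conjTranspose_smul]
    refine Finset.sum_congr rfl fun i _ => ?_
    rw [(hf i).1]
    norm_num
  · intro x hx
    have hsx : star x = x := by ext j; simp
    have h1 : (∑ i, w i • f i) *ᵥ x = ∑ i, (w i • f i) *ᵥ x :=
      map_sum (Matrix.mulVec.addMonoidHomLeft x) _ _
    have key : x ⬝ᵥ ((∑ i, w i • f i) *ᵥ x) = ∑ i, w i * (x ⬝ᵥ (f i *ᵥ x)) := by
      rw [h1]
      have h2 : ∀ g : Fin M → Fin n → ℝ, x ⬝ᵥ (∑ i, g i) = ∑ i, x ⬝ᵥ g i := by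
        intro g
        simp only [dotProduct, Finset.sum_apply, Finset.mul_sum]
        exact Finset.sum_comm
      rw [h2]
      refine Finset.sum_congr rfl fun i _ => ?_
      rw [Matrix.smul_mulVec, dotProduct_smul, smul_eq_mul]
    rw [hsx, key]
    have hterm : ∀ i ∈ Finset.univ, 0 ≤ w i * (x ⬝ᵥ (f i *ᵥ x)) := by
      intro i _
      have := (hf i).dotProduct_mulVec_pos hx
      rw [hsx] at this
      exact mul_nonneg (hw i) this.le
    refine Finset.sum_pos' hterm ⟨i0, Finset.mem_univ _, ?_⟩
    have := (hf i0).dotProduct_mulVec_pos hx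
    rw [hsx] at this
    exact mul_pos hi0 this

private lemma inv_sub_inv_eq {n : ℕ} (A B : Matrix (Fin n) (Fin n) ℝ)
    (hA : IsUnit A.det) (hB : IsUnit B.det) :
    A⁻¹ - B⁻¹ = A⁻¹ * (B - A) * B⁻¹ := by
  rw [Matrix.mul_sub, Matrix.nonsing_inv_mul _ hA, Matrix.sub_mul,
    Matrix.mul_assoc, Matrix.mul_nonsing_inv _ hB, Matrix.mul_one, Matrix.one_mul]

/-- Proposition 2 of the paper: estimation accuracy loss. -/
theorem fusion_accuracy_loss {M n : ℕ} (hM : 1 ≤ M)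
    (P Sg : Fin M → Matrix (Fin n) (Fin n) ℝ) (w : Fin M → ℝ)
    (hP : ∀ i, (P i).PosDef) (hSg : ∀ i, (Sg i).PosSemidef)
    (hw : ∀ i, 0 ≤ w i) (hwsum : ∑ i, w i = 1) :
    (∑ i, w i • (P i + Sg i)⁻¹).PosDef ∧
    (∑ i, w i • (P i)⁻¹).PosDef ∧
    (∑ i, w i • (P i + Sg i)⁻¹)⁻¹ - (∑ i, w i • (P i)⁻¹)⁻¹ =
      (∑ i, w i • (P i + Sg i)⁻¹)⁻¹ *
        (∑ i, w i • ((P i)⁻¹ * Sg i * (P i + Sg i)⁻¹)) *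
          (∑ i, w i • (P i)⁻¹)⁻¹ := by
  have hQ : ∀ i, (P i + Sg i).PosDef := fun i => (hP i).add_posSemidef (hSg i)
  have hA : (∑ i, w i • (P i + Sg i)⁻¹).PosDef :=
    sum_smul_posDef _ w (fun i => (hQ i).inv) hw hwsum
  have hB : (∑ i, w i • (P i)⁻¹).PosDef :=
    sum_smul_posDef _ w (fun i => (hP i).inv) hw hwsum
  refine ⟨hA, hB, ?_⟩
  have hAu : IsUnit (∑ i, w i • (P i + Sg i)⁻¹).det := hA.det_pos.ne'.isUnit
  have hBu : IsUnit (∑ i, w i • (P i)⁻¹).det := hB.det_pos.ne'.isUnit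
  have hmid : (∑ i, w i • ((P i)⁻¹ * Sg i * (P i + Sg i)⁻¹)) =
      (∑ i, w i • (P i)⁻¹) - (∑ i, w i • (P i + Sg i)⁻¹) := by
    rw [← Finset.sum_sub_distrib]
    refine Finset.sum_congr rfl fun i _ => ?_
    rw [← smul_sub]
    congr 1
    have := inv_sub_inv_eq (P i) (P i + Sg i) (hP i).det_pos.ne'.isUnit
      (hQ i).det_pos.ne'.isUnit
    rw [add_sub_cancel_left] at this
    exact this.symm
  rw [hmid]
  exact inv_sub_inv_eq _ _ hAu hBu
end
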